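/- Let Q be a convex polytope contained in the standard unit simplex Σ ⊂ ℝᵐ, with Q not contained in the boundary ∂Σ. Then for each z ∈ (ℂ*)ᵐ there exist unique τ_z ∈ ℝᵐ and x_z ∈ Q such that μ(e^{−τ_z/2}·z) = x_z and τ_z lies in the normal cone to Q at x_z. -/

import Mathlib

open Real Finset

noncomputable def psiF (a s : ℝ) : ℝ := s * (Real.log a - Real.log s)

lemma mul_log_lower {u : ℝ} (hu : 0 < u) : u - 1 ≤ u * Real.log u := by
  have h := Real.log_le_sub_one_of_pos (inv_pos.mpr hu)
  rw [Real.log_inv] at h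
  have := mul_le_mul_of_nonneg_left h hu.le
  rw [mul_sub, mul_inv_cancel₀ hu.ne'] at this
  nlinarith

lemma mul_log_lower_strict {u : ℝ} (hu : 0 < u) (hne : u ≠ 1) : u - 1 < u * Real.log u := by
  have h := Real.log_lt_sub_one_of_pos (inv_pos.mpr hu) (by
    simp only [ne_eq, inv_eq_one]; exact hne)
  rw [Real.log_inv] at h
  have := mul_lt_mul_of_pos_left h hu
  rw [mul_sub, mul_inv_cancel₀ hu.ne'] at this
  nlinarith

lemma psiF_le {a s t : ℝ} (hs : 0 < s) (ht : 0 ≤ t) :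
    psiF a t ≤ psiF a s + (Real.log a - Real.log s - 1) * (t - s) := by
  have key : 0 ≤ t * Real.log t - t * Real.log s - t + s := by
    rcases eq_or_lt_of_le ht with h | h
    · simp [← h]; linarith
    · have hu : 0 < t / s := div_pos h hs
      have h1 := mul_log_lower hu
      have h2 : t * Real.log t - t * Real.log s = t * Real.log (t / s) := by
        rw [Real.log_div h.ne' hs.ne']; ring
      have h3 : t * Real.log (t / s) = s * ((t/s) * Real.log (t/s)) := by
        field_simp
      have h4 : s * (t/s - 1) = t - s := by field_simp
      nlinarith [mul_le_mul_of_nonneg_left h1 hs.le]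
  simp only [psiF]; nlinarith

lemma psiF_lt {a s t : ℝ} (hs : 0 < s) (ht : 0 ≤ t) (hne : t ≠ s) :
    psiF a t < psiF a s + (Real.log a - Real.log s - 1) * (t - s) := by
  have key : 0 < t * Real.log t - t * Real.log s - t + s := by
    rcases eq_or_lt_of_le ht with h | h
    · simp [← h]; linarith
    · have hu : 0 < t / s := div_pos h hs
      have hune : t / s ≠ 1 := by
        intro hc; exact hne (by field_simp at hc; linarith)
      have h1 := mul_log_lower_strict hu hune
      have h2 : t * Real.log t - t * Real.log s = t * Real.log (t / s) := by
        rw [Real.log_div h.ne' hs.ne']; ring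
      have h3 : t * Real.log (t / s) = s * ((t/s) * Real.log (t/s)) := by
        field_simp
      have h4 : s * (t/s - 1) = t - s := by field_simp
      nlinarith [mul_lt_mul_of_pos_left h1 hs]
  simp only [psiF]; nlinarith

noncomputable def PhiF (m : ℕ) (a x : Fin m → ℝ) : ℝ :=
  (∑ j, psiF (a j) (x j)) + psiF 1 (1 - ∑ j, x j)

noncomputable def tauOf (m : ℕ) (a x : Fin m → ℝ) : Fin m → ℝ :=
  fun j => Real.log (a j) + Real.log (1 - ∑ k, x k) - Real.log (x j)

lemma sum_linear_eq (m : ℕ) (a x y : Fin m → ℝ) :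
    ∑ j, (Real.log (a j) - Real.log (x j) - 1) * (y j - x j)
      + (Real.log 1 - Real.log (1 - ∑ j, x j) - 1) * ((1 - ∑ j, y j) - (1 - ∑ j, x j))
      = ∑ j, tauOf m a x j * (y j - x j) := by
  have h1 : ∑ j, tauOf m a x j * (y j - x j)
      - ∑ j, (Real.log (a j) - Real.log (x j) - 1) * (y j - x j)
      = ∑ j, (Real.log (1 - ∑ k, x k) + 1) * (y j - x j) := by
    rw [← Finset.sum_sub_distrib]
    congr 1; funext j; simp only [tauOf]; ring
  rw [← Finset.mul_sum, Finset.sum_sub_distrib] at h1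
  rw [Real.log_one]
  linarith [h1]

lemma Phi_grad_le (m : ℕ) (a x y : Fin m → ℝ) (hx : ∀ j, 0 < x j)
    (hx0 : 0 < 1 - ∑ j, x j) (hy : ∀ j, 0 ≤ y j) (hy0 : ∑ j, y j ≤ 1) :
    PhiF m a y ≤ PhiF m a x + ∑ j, tauOf m a x j * (y j - x j) := by
  have h1 : ∀ j ∈ Finset.univ, psiF (a j) (y j)
      ≤ psiF (a j) (x j) + (Real.log (a j) - Real.log (x j) - 1) * (y j - x j) :=
    fun j _ => psiF_le (hx j) (hy j)
  have hs := Finset.sum_le_sum h1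
  rw [Finset.sum_add_distrib] at hs
  have h0 : psiF 1 (1 - ∑ j, y j) ≤ psiF 1 (1 - ∑ j, x j)
      + (Real.log 1 - Real.log (1 - ∑ j, x j) - 1) * ((1 - ∑ j, y j) - (1 - ∑ j, x j)) :=
    psiF_le hx0 (by linarith)
  have key := sum_linear_eq m a x y
  simp only [PhiF]; linarith

lemma Phi_grad_lt (m : ℕ) (a x y : Fin m → ℝ) (hx : ∀ j, 0 < x j)
    (hx0 : 0 < 1 - ∑ j, x j) (hy : ∀ j, 0 ≤ y j) (hy0 : ∑ j, y j ≤ 1)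
    (hne : y ≠ x) :
    PhiF m a y < PhiF m a x + ∑ j, tauOf m a x j * (y j - x j) := by
  obtain ⟨j0, hj0⟩ : ∃ j, y j ≠ x j := by
    by_contra hc; push_neg at hc; exact hne (funext hc)
  have h1 : ∀ j ∈ Finset.univ, psiF (a j) (y j)
      ≤ psiF (a j) (x j) + (Real.log (a j) - Real.log (x j) - 1) * (y j - x j) :=
    fun j _ => psiF_le (hx j) (hy j)
  have hs := Finset.sum_lt_sum h1 ⟨j0, Finset.mem_univ j0, psiF_lt (hx j0) (hy j0) hj0⟩
  rw [Finset.sum_add_distrib] at hs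
  have h0 : psiF 1 (1 - ∑ j, y j) ≤ psiF 1 (1 - ∑ j, x j)
      + (Real.log 1 - Real.log (1 - ∑ j, x j) - 1) * ((1 - ∑ j, y j) - (1 - ∑ j, x j)) :=
    psiF_le hx0 (by linarith)
  have key := sum_linear_eq m a x y
  simp only [PhiF]; linarith

lemma sol_props (m : ℕ) (a τ x : Fin m → ℝ) (ha : ∀ j, 0 < a j)
    (hx : ∀ j, x j = Real.exp (-(τ j)) * a j / (1 + ∑ k, Real.exp (-(τ k)) * a k)) :
    (∀ j, 0 < x j) ∧ (0 < 1 - ∑ j, x j) ∧ ∀ j, τ j = tauOf m a x j := by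
  set S := ∑ k, Real.exp (-(τ k)) * a k with hS
  have hSpos : 0 ≤ S := Finset.sum_nonneg fun k _ =>
    mul_nonneg (Real.exp_pos _).le (ha k).le
  have h1S : 0 < 1 + S := by linarith
  have hxpos : ∀ j, 0 < x j := fun j => by
    rw [hx j]; exact div_pos (mul_pos (Real.exp_pos _) (ha j)) h1S
  have hsum : ∑ j, x j = S / (1 + S) := by
    rw [Finset.sum_congr rfl fun j (_ : j ∈ Finset.univ) => hx j, ← Finset.sum_div]
  have hx0 : 1 - ∑ j, x j = 1 / (1 + S) := by
    rw [hsum]; field_simp; ring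
  refine ⟨hxpos, by rw [hx0]; positivity, fun j => ?_⟩
  have hxj := hxpos j
  simp only [tauOf]
  rw [hx0, hx j, Real.log_div one_ne_zero h1S.ne',
    Real.log_div (mul_pos (Real.exp_pos _) (ha j)).ne' h1S.ne',
    Real.log_mul (Real.exp_pos _).ne' (ha j).ne', Real.log_exp, Real.log_one]
  ring

lemma helper_zero {a pj t A : ℝ} (hpj : 0 < pj) (ht : 0 < t)
    (hlt : Real.log t ≤ Real.log a - Real.log pj - A / pj) :
    t * A ≤ psiF a (t * pj) := by
  have h : psiF a (t * pj) = t * (pj * (Real.log a - Real.log pj - Real.log t)) := by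
    rw [psiF, Real.log_mul ht.ne' hpj.ne']; ring
  rw [h]
  have h2 : A / pj ≤ Real.log a - Real.log pj - Real.log t := by linarith
  have h3 : pj * (A / pj) ≤ pj * (Real.log a - Real.log pj - Real.log t) :=
    mul_le_mul_of_nonneg_left h2 hpj.le
  rw [mul_div_cancel₀ _ hpj.ne'] at h3
  exact mul_le_mul_of_nonneg_left h3 ht.le

lemma helper_pos {a u s t dd c : ℝ} (hc : 0 < c) (hcu : c ≤ u) (hu1 : u ≤ 1)
    (hs : 0 ≤ s) (hd : |dd| ≤ 1) (ht : 0 ≤ t) (hrel : s - u = -(t * dd)) :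
    -(t * (|Real.log a| - Real.log c + 1)) ≤ psiF a u - psiF a s := by
  have hu : 0 < u := lt_of_lt_of_le hc hcu
  have h1 := psiF_le (a := a) hu hs
  rw [hrel] at h1
  have hlogu1 : Real.log u ≤ 0 := Real.log_nonpos hu.le hu1
  have hlogu2 : Real.log c ≤ Real.log u := Real.log_le_log hc hcu
  have habs : |Real.log a - Real.log u - 1| ≤ |Real.log a| - Real.log c + 1 := by
    have h6 := le_abs_self (Real.log a)
    have h7 := neg_abs_le (Real.log a)
    rw [abs_le]
    constructor <;> nlinarith
  have hkey : -(t * (|Real.log a| - Real.log c + 1))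
      ≤ (Real.log a - Real.log u - 1) * (t * dd) := by
    have h5 : |(Real.log a - Real.log u - 1) * (t * dd)| ≤ t * (|Real.log a| - Real.log c + 1) := by
      rw [abs_mul, abs_mul, abs_of_nonneg ht]
      calc |Real.log a - Real.log u - 1| * (t * |dd|)
          ≤ (|Real.log a| - Real.log c + 1) * (t * 1) := by
            apply mul_le_mul habs (by nlinarith) (by positivity)
            linarith [abs_nonneg (Real.log a), Real.log_nonpos hc.le (le_trans hcu hu1)]
        _ = t * (|Real.log a| - Real.log c + 1) := by ring
    linarith [neg_abs_le ((Real.log a - Real.log u - 1) * (t * dd))]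
  linarith

lemma maxOn_interior (m : ℕ) (a : Fin m → ℝ) (_ha : ∀ j, 0 < a j)
    (Q : Set (Fin m → ℝ)) (hQconv : Convex ℝ Q)
    (hQS : ∀ w ∈ Q, (∀ j, 0 ≤ w j) ∧ ∑ j, w j ≤ 1)
    (p : Fin m → ℝ) (hpQ : p ∈ Q) (hp : ∀ j, 0 < p j) (hpS : ∑ j, p j < 1)
    (x : Fin m → ℝ) (hxQ : x ∈ Q) (hmax : ∀ w ∈ Q, PhiF m a w ≤ PhiF m a x) :
    (∀ j, 0 < x j) ∧ 0 < 1 - ∑ j, x j := by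
  have hxnn : ∀ j, 0 ≤ x j := (hQS x hxQ).1
  have hxs : ∑ j, x j ≤ 1 := (hQS x hxQ).2
  have hpnn : ∀ j, 0 ≤ p j := fun j => (hp j).le
  -- the contradiction engine
  have main : ¬ ((∃ j, x j = 0) ∨ 1 - ∑ j, x j = 0) := by
    intro hbad
    set x0 : ℝ := 1 - ∑ j, x j with hx0def
    set p0 : ℝ := 1 - ∑ j, p j with hp0def
    have hx0nn : 0 ≤ x0 := by simp only [hx0def]; linarith
    have hp0pos : 0 < p0 := by simp only [hp0def]; linarith
    have hxle1 : ∀ j, x j ≤ 1 := fun j => by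
      have := Finset.single_le_sum (f := x) (fun k _ => hxnn k) (Finset.mem_univ j)
      linarith
    have hple1 : ∀ j, p j ≤ 1 := fun j => by
      have := Finset.single_le_sum (f := p) (fun k _ => hpnn k) (Finset.mem_univ j)
      linarith
    have hx0le1 : x0 ≤ 1 := by
      have : 0 ≤ ∑ j, x j := Finset.sum_nonneg fun j _ => hxnn j
      simp only [hx0def]; linarith
    have hp0le1 : p0 ≤ 1 := by
      have : 0 ≤ ∑ j, p j := Finset.sum_nonneg fun j _ => hpnn j
      simp only [hp0def]; linarith
    set M : Fin m → ℝ := fun j => |Real.log (a j)| - Real.log (min (x j) (p j)) + 1 with hMdef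
    set M0 : ℝ := |Real.log (1:ℝ)| - Real.log (min x0 p0) + 1 with hM0def
    have hMnn : ∀ j, 0 ≤ M j := fun j => by
      have h1 : Real.log (min (x j) (p j)) ≤ 0 :=
        Real.log_nonpos (le_min (hxnn j) (hpnn j)) (min_le_of_left_le (hxle1 j))
      simp only [hMdef]
      have := abs_nonneg (Real.log (a j)); linarith
    have hM0nn : 0 ≤ M0 := by
      have h1 : Real.log (min x0 p0) ≤ 0 :=
        Real.log_nonpos (le_min hx0nn hp0pos.le) (min_le_of_left_le hx0le1)
      simp only [hM0def]
      have := abs_nonneg (Real.log (1:ℝ)); linarith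
    set A : ℝ := 1 + (∑ j, M j) + M0 with hAdef
    have hMsum : 0 ≤ ∑ j, M j := Finset.sum_nonneg fun j _ => hMnn j
    have hA1 : 1 ≤ A := by simp only [hAdef]; linarith
    -- choose t
    set K : ℝ := ((insert (Real.log 1 - Real.log p0 - A / p0)
        (Finset.univ.image fun j => Real.log (a j) - Real.log (p j) - A / p j))).min'
        (Finset.insert_nonempty _ _) with hKdef
    set t : ℝ := min (1/2) (Real.exp K) with htdef
    have ht0 : 0 < t := lt_min (by norm_num) (Real.exp_pos K)
    have ht2 : t ≤ 1/2 := min_le_left _ _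
    have ht1 : t ≤ 1 := by linarith
    have hlogt : Real.log t ≤ K := by
      calc Real.log t ≤ Real.log (Real.exp K) :=
            Real.log_le_log ht0 (min_le_right _ _)
        _ = K := Real.log_exp K
    have hlogtj : ∀ j, Real.log t ≤ Real.log (a j) - Real.log (p j) - A / p j := fun j => by
      refine le_trans hlogt (Finset.min'_le _ _ ?_)
      exact Finset.mem_insert_of_mem (Finset.mem_image_of_mem _ (Finset.mem_univ j))
    have hlogt0 : Real.log t ≤ Real.log 1 - Real.log p0 - A / p0 :=
      le_trans hlogt (Finset.min'_le _ _ (Finset.mem_insert_self _ _))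
    clear_value t K
    clear hKdef htdef hlogt
    -- the perturbed point
    set y : Fin m → ℝ := fun j => (1 - t) * x j + t * p j with hydef
    have hyQ : y ∈ Q := by
      have h := hQconv hxQ hpQ (by linarith : (0:ℝ) ≤ 1 - t) ht0.le (by ring)
      have heq : (1 - t) • x + t • p = y := by
        funext j; simp [hydef, smul_eq_mul]
      rwa [heq] at h
    have hysum : ∑ j, y j = (1 - t) * (∑ j, x j) + t * (∑ j, p j) := by
      simp only [hydef]
      rw [Finset.sum_add_distrib, ← Finset.mul_sum, ← Finset.mul_sum]
    have hy0 : 1 - ∑ j, y j = (1 - t) * x0 + t * p0 := by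
      rw [hysum]; simp only [hx0def, hp0def]; ring
    -- per-coordinate lower bounds
    set L : Fin m → ℝ := fun j => if x j = 0 then A else -(M j) with hLdef
    have hterm : ∀ j, t * L j ≤ psiF (a j) (y j) - psiF (a j) (x j) := by
      intro j
      simp only [hLdef]
      by_cases hj : x j = 0
      · rw [if_pos hj]
        have hyj : y j = t * p j := by simp [hydef, hj]
        have hx0' : psiF (a j) (x j) = 0 := by simp [psiF, hj]
        rw [hyj, hx0']
        have := helper_zero (hp j) ht0 (hlogtj j)
        linarith
      · rw [if_neg hj]
        have hxjpos : 0 < x j := lt_of_le_of_ne (hxnn j) (Ne.symm hj)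
        have hcpos : 0 < min (x j) (p j) := lt_min hxjpos (hp j)
        have hcu : min (x j) (p j) ≤ y j := by
          have h1 := mul_le_mul_of_nonneg_left (min_le_left (x j) (p j))
            (by linarith : (0:ℝ) ≤ 1 - t)
          have h2 := mul_le_mul_of_nonneg_left (min_le_right (x j) (p j)) ht0.le
          simp only [hydef]
          linarith
        have hu1 : y j ≤ 1 := by
          have h1 := mul_le_mul_of_nonneg_left (hxle1 j) (by linarith : (0:ℝ) ≤ 1 - t)
          have h2 := mul_le_mul_of_nonneg_left (hple1 j) ht0.le
          simp only [hydef]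
          linarith
        have hd : |p j - x j| ≤ 1 := by
          rw [abs_le]
          constructor <;> [linarith [hple1 j, hxnn j, hxle1 j, hpnn j];
            linarith [hple1 j, hxnn j, hxle1 j, hpnn j]]
        have hrel : x j - y j = -(t * (p j - x j)) := by simp only [hydef]; ring
        have := helper_pos (a := a j) hcpos hcu hu1 (hxnn j) hd ht0.le hrel
        simp only [hMdef]
        linarith
    set L0 : ℝ := if x0 = 0 then A else -M0 with hL0def
    have hterm0 : t * L0 ≤ psiF 1 (1 - ∑ j, y j) - psiF 1 x0 := by
      simp only [hL0def]
      by_cases h0 : x0 = 0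
      · rw [if_pos h0]
        have hy0' : 1 - ∑ j, y j = t * p0 := by rw [hy0, h0]; ring
        have hx0' : psiF 1 x0 = 0 := by simp [psiF, h0]
        rw [hy0', hx0']
        have := helper_zero (a := 1) hp0pos ht0 hlogt0
        linarith
      · rw [if_neg h0]
        have hx0pos : 0 < x0 := lt_of_le_of_ne hx0nn (Ne.symm h0)
        have hcpos : 0 < min x0 p0 := lt_min hx0pos hp0pos
        have hcu : min x0 p0 ≤ 1 - ∑ j, y j := by
          rw [hy0]
          have h1 := mul_le_mul_of_nonneg_left (min_le_left x0 p0)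
            (by linarith : (0:ℝ) ≤ 1 - t)
          have h2 := mul_le_mul_of_nonneg_left (min_le_right x0 p0) ht0.le
          linarith
        have hu1 : 1 - ∑ j, y j ≤ 1 := by
          rw [hy0]
          have h1 := mul_le_mul_of_nonneg_left hx0le1 (by linarith : (0:ℝ) ≤ 1 - t)
          have h2 := mul_le_mul_of_nonneg_left hp0le1 ht0.le
          linarith
        have hd : |p0 - x0| ≤ 1 := by
          rw [abs_le]
          constructor <;> linarith
        have hrel : x0 - (1 - ∑ j, y j) = -(t * (p0 - x0)) := by rw [hy0]; ring
        have := helper_pos (a := (1:ℝ)) hcpos hcu hu1 hx0nn hd ht0.le hrel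
        simp only [hM0def]
        linarith
    -- aggregate
    have hLlow : ∀ j, -(M j) ≤ L j := fun j => by
      simp only [hLdef]
      by_cases hj : x j = 0
      · rw [if_pos hj]; linarith [hMnn j]
      · rw [if_neg hj]
    have hL0low : -M0 ≤ L0 := by
      simp only [hL0def]
      by_cases h0 : x0 = 0
      · rw [if_pos h0]; linarith
      · rw [if_neg h0]
    have hLsum : 1 ≤ (∑ j, L j) + L0 := by
      rcases hbad with ⟨j0, hj0⟩ | h0
      · have hLj0 : L j0 = A := by simp only [hLdef]; rw [if_pos hj0]
        have hsplit : L j0 + ∑ j ∈ Finset.univ.erase j0, L j = ∑ j, L j :=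
          Finset.add_sum_erase _ _ (Finset.mem_univ j0)
        have herase : -(∑ j, M j) ≤ ∑ j ∈ Finset.univ.erase j0, L j := by
          have h1 : ∑ j ∈ Finset.univ.erase j0, (-(M j)) ≤ ∑ j ∈ Finset.univ.erase j0, L j :=
            Finset.sum_le_sum fun j _ => hLlow j
          have h2 : ∑ j ∈ Finset.univ.erase j0, M j ≤ ∑ j, M j :=
            Finset.sum_le_sum_of_subset_of_nonneg (Finset.erase_subset _ _)
              (fun j _ _ => hMnn j)
          rw [Finset.sum_neg_distrib] at h1
          linarith
        simp only [hAdef] at hLj0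
        linarith
      · have hL0' : L0 = A := by simp only [hL0def]; rw [if_pos h0]
        have h1 : ∑ j, (-(M j)) ≤ ∑ j, L j := Finset.sum_le_sum fun j _ => hLlow j
        rw [Finset.sum_neg_distrib] at h1
        simp only [hAdef] at hL0'
        linarith
    -- conclude
    have hsum1 : ∑ j, (t * L j) ≤ ∑ j, (psiF (a j) (y j) - psiF (a j) (x j)) :=
      Finset.sum_le_sum fun j _ => hterm j
    rw [Finset.sum_sub_distrib, ← Finset.mul_sum] at hsum1
    have hfinal : PhiF m a x < PhiF m a y := by
      simp only [PhiF, ← hx0def]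
      have : t * ((∑ j, L j) + L0) ≤
          ((∑ j, psiF (a j) (y j)) - ∑ j, psiF (a j) (x j))
            + (psiF 1 (1 - ∑ j, y j) - psiF 1 x0) := by
        rw [mul_add]; linarith
      nlinarith
    exact absurd (hmax y hyQ) (not_le.mpr hfinal)
  push_neg at main
  obtain ⟨h1, h2⟩ := main
  refine ⟨fun j => lt_of_le_of_ne (hxnn j) (Ne.symm (h1 j)), lt_of_le_of_ne (by linarith) (Ne.symm h2)⟩

lemma psiF_continuous (b : ℝ) : Continuous (psiF b) := by
  have h : psiF b = fun s => s * Real.log b + Real.negMulLog s := by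
    funext s; rw [psiF, Real.negMulLog]; ring
  rw [h]
  exact (continuous_id.mul continuous_const).add Real.continuous_negMulLog

lemma PhiF_continuous (m : ℕ) (a : Fin m → ℝ) : Continuous (PhiF m a) := by
  unfold PhiF
  apply Continuous.add
  · exact continuous_finset_sum _ fun j _ => (psiF_continuous (a j)).comp (continuous_apply j)
  · exact (psiF_continuous 1).comp
      (continuous_const.sub (continuous_finset_sum _ fun j _ => continuous_apply j))

lemma exists_sol (m : ℕ) (a : Fin m → ℝ) (ha : ∀ j, 0 < a j)
    (Q : Set (Fin m → ℝ)) (hQne : Q.Nonempty) (hQcomp : IsCompact Q) (hQconv : Convex ℝ Q)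
    (hQS : ∀ w ∈ Q, (∀ j, 0 ≤ w j) ∧ ∑ j, w j ≤ 1)
    (p : Fin m → ℝ) (hpQ : p ∈ Q) (hp : ∀ j, 0 < p j) (hpS : ∑ j, p j < 1) :
    ∃ x ∈ Q, (∀ j, 0 < x j) ∧ (0 < 1 - ∑ j, x j) ∧
      ∀ y ∈ Q, ∑ j, tauOf m a x j * (y j - x j) ≤ 0 := by
  obtain ⟨x, hxQ, hmax⟩ := hQcomp.exists_isMaxOn hQne (PhiF_continuous m a).continuousOn
  have hmax' : ∀ w ∈ Q, PhiF m a w ≤ PhiF m a x := fun w hw => hmax hw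
  obtain ⟨hxpos, hx0pos⟩ := maxOn_interior m a ha Q hQconv hQS p hpQ hp hpS x hxQ hmax'
  refine ⟨x, hxQ, hxpos, hx0pos, fun y hyQ => ?_⟩
  have hynn : ∀ j, 0 ≤ y j := (hQS y hyQ).1
  have hys : ∑ j, y j ≤ 1 := (hQS y hyQ).2
  have hxnn : ∀ j, 0 ≤ x j := fun j => (hxpos j).le
  have hxs : ∑ j, x j ≤ 1 := (hQS x hxQ).2
  set F : ℝ → ℝ := fun t =>
    ∑ j, tauOf m a (fun k => x k + t * (y k - x k)) j * (y j - x j) with hFdef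
  have hF : ∀ t ∈ Set.Ioo (0:ℝ) 1, F t ≤ 0 := by
    rintro t ⟨ht0, ht1⟩
    set wt : Fin m → ℝ := fun k => x k + t * (y k - x k) with hwtdef
    have hwtQ : wt ∈ Q := by
      have h := hQconv hxQ hyQ (by linarith : (0:ℝ) ≤ 1 - t) ht0.le (by ring)
      have heq : (1 - t) • x + t • y = wt := by
        funext k; simp [hwtdef, smul_eq_mul]; ring
      rwa [heq] at h
    have hwtpos : ∀ k, 0 < wt k := fun k => by
      have h1 : wt k = (1 - t) * x k + t * y k := by simp [hwtdef]; ring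
      rw [h1]
      have := mul_pos (by linarith : (0:ℝ) < 1 - t) (hxpos k)
      have := mul_nonneg ht0.le (hynn k)
      linarith
    have hwtsum : ∑ k, wt k = (1 - t) * (∑ k, x k) + t * (∑ k, y k) := by
      simp only [hwtdef]
      rw [Finset.sum_add_distrib, ← Finset.mul_sum, Finset.sum_sub_distrib]
      ring
    have hwt0 : 0 < 1 - ∑ k, wt k := by
      rw [hwtsum]
      have := mul_pos (by linarith : (0:ℝ) < 1 - t) hx0pos
      have := mul_nonneg ht0.le (by linarith : (0:ℝ) ≤ 1 - ∑ k, y k)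
      nlinarith
    have hgrad := Phi_grad_le m a wt x hwtpos hwt0 hxnn hxs
    have hsum : ∑ j, tauOf m a wt j * (x j - wt j) = -t * F t := by
      simp only [hFdef, ← Finset.mul_sum, ← Finset.sum_neg_distrib]
      rw [Finset.mul_sum]
      refine Finset.sum_congr rfl fun j _ => ?_
      have : x j - wt j = -(t * (y j - x j)) := by simp [hwtdef]
      rw [this]; ring
    rw [hsum] at hgrad
    have hle := hmax' wt hwtQ
    nlinarith
  -- take the limit t → 0+
  have key : Filter.Tendsto F (nhds 0) (nhds (∑ j, tauOf m a x j * (y j - x j))) := by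
    simp only [hFdef]
    apply tendsto_finset_sum
    intro j _
    have hc : ContinuousAt (fun t : ℝ =>
        tauOf m a (fun k => x k + t * (y k - x k)) j * (y j - x j)) 0 := by
      simp only [tauOf]
      refine ContinuousAt.mul ?_ continuousAt_const
      refine ContinuousAt.sub (ContinuousAt.add continuousAt_const ?_) ?_
      · refine ContinuousAt.log ?_ ?_
        · exact (continuous_const.sub (continuous_finset_sum _ fun k _ =>
            continuous_const.add (continuous_id.mul continuous_const))).continuousAt
        · simpa using hx0pos.ne'
      · refine ContinuousAt.log ?_ ?_
        · exact (continuous_const.add (continuous_id.mul continuous_const)).continuousAt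
        · simpa using (hxpos j).ne'
    have h0 : tauOf m a x j * (y j - x j)
        = (fun t : ℝ => tauOf m a (fun k => x k + t * (y k - x k)) j * (y j - x j)) 0 := by
      simp
    rw [h0]
    exact hc.tendsto
  have hkey : Filter.Tendsto F (nhdsWithin 0 (Set.Ioi 0))
      (nhds (∑ j, tauOf m a x j * (y j - x j))) := key.mono_left nhdsWithin_le_nhds
  refine le_of_tendsto hkey ?_
  filter_upwards [Ioo_mem_nhdsGT_of_mem (Set.mem_Ico.mpr ⟨le_refl (0:ℝ), zero_lt_one⟩)]
    with t ht using hF t ht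

/-- For a convex polytope `Q ⊆ Σ` not contained in `∂Σ` and any
`z ∈ (ℂ*)ᵐ`, there exist unique `τ_z ∈ ℝᵐ` and `x_z ∈ Q` with
`μ(e^{−τ_z/2}·z) = x_z` and `τ_z` in the normal cone to `Q` at `x_z`. -/
theorem exists_unique_normal_cone_point (m : ℕ)
    (V : Finset (Fin m → ℝ)) (hV : V.Nonempty)
    (Q : Set (Fin m → ℝ)) (hQ : Q = convexHull ℝ (V : Set (Fin m → ℝ)))
    (hQSigma : Q ⊆ {x | (∀ j, 0 ≤ x j) ∧ ∑ j, x j ≤ 1})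
    (hbd : ¬ Q ⊆ frontier {x : Fin m → ℝ | (∀ j, 0 ≤ x j) ∧ ∑ j, x j ≤ 1})
    (μ : (Fin m → ℂ) → (Fin m → ℝ))
    (hμ : ∀ w j, μ w j = ‖w j‖ ^ 2 / (1 + ∑ k, ‖w k‖ ^ 2))
    (z : Fin m → ℂ) (hz : ∀ j, z j ≠ 0) :
    ∃! τx : (Fin m → ℝ) × (Fin m → ℝ),
      τx.2 ∈ Q ∧
      μ (fun j => Complex.exp (-(τx.1 j : ℂ) / 2) * z j) = τx.2 ∧
      ∀ y ∈ Q, ∑ j, τx.1 j * y j ≤ ∑ j, τx.1 j * τx.2 j := by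
  classical
  have hQne : Q.Nonempty := by
    rw [hQ]; exact (Finset.coe_nonempty.mpr hV).convexHull
  -- dispose of the degenerate case m = 0
  rcases Nat.eq_zero_or_pos m with hm0 | hm
  · subst hm0
    obtain ⟨x0, hx0Q⟩ := hQne
    refine ⟨((fun _ => 0), x0), ⟨hx0Q, funext fun j => j.elim0, fun y _ => by simp⟩, ?_⟩
    rintro ⟨τ', x'⟩ ⟨_, _, _⟩
    exact Prod.ext_iff.mpr ⟨funext fun j => j.elim0, funext fun j => j.elim0⟩
  -- setup
  set a : Fin m → ℝ := fun j => ‖z j‖ ^ 2 with hadef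
  have ha : ∀ j, 0 < a j := fun j => pow_pos (norm_pos_iff.mpr (hz j)) 2
  have hw : ∀ (τ : Fin m → ℝ) (j : Fin m),
      ‖Complex.exp (-(τ j : ℂ) / 2) * z j‖ ^ 2 = Real.exp (-(τ j)) * a j := by
    intro τ j
    rw [norm_mul, mul_pow]
    congr 1
    have hcast : (-(τ j : ℂ) / 2) = ((-(τ j) / 2 : ℝ) : ℂ) := by push_cast; ring
    rw [hcast, Complex.norm_exp, Complex.ofReal_re, sq, ← Real.exp_add]
    ring_nf
  have hchar : ∀ (τ x : Fin m → ℝ),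
      μ (fun j => Complex.exp (-(τ j : ℂ) / 2) * z j) = x →
      ∀ j, x j = Real.exp (-(τ j)) * a j / (1 + ∑ k, Real.exp (-(τ k)) * a k) := by
    intro τ x hmu j
    have h := congrFun hmu j
    simp only [hμ] at h
    rw [← h]
    simp only [hw τ]
  have hQconv : Convex ℝ Q := hQ ▸ convex_convexHull ℝ _
  have hQcomp : IsCompact Q := hQ ▸ V.finite_toSet.isCompact_convexHull (𝕜 := ℝ)
  have hQS : ∀ w ∈ Q, (∀ j, 0 ≤ w j) ∧ ∑ j, w j ≤ 1 := fun w hwq => hQSigma hwq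
  -- interior point p
  obtain ⟨p, hpQ, hpfr⟩ := Set.not_subset.mp hbd
  have hpS : (∀ j, 0 ≤ p j) ∧ ∑ j, p j ≤ 1 := hQSigma hpQ
  have hpint : p ∈ interior {x : Fin m → ℝ | (∀ j, 0 ≤ x j) ∧ ∑ j, x j ≤ 1} := by
    by_contra hc
    exact hpfr ⟨subset_closure hpS, hc⟩
  obtain ⟨ε, hε, hball⟩ := Metric.isOpen_iff.mp isOpen_interior p hpint
  have hup : ∀ (j : Fin m) (v : ℝ), |v - p j| < ε →
      (∀ i, 0 ≤ Function.update p j v i) ∧ ∑ i, Function.update p j v i ≤ 1 := by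
    intro j v hv
    have hd : dist (Function.update p j v) p < ε := by
      rw [dist_pi_lt_iff hε]
      intro i
      by_cases hij : i = j
      · subst hij; rw [Function.update_self, Real.dist_eq]; exact hv
      · rw [Function.update_of_ne hij, dist_self]; exact hε
    have hmem : Function.update p j v ∈ {x : Fin m → ℝ | (∀ j, 0 ≤ x j) ∧ ∑ j, x j ≤ 1} :=
      interior_subset (hball (Metric.mem_ball.mpr hd))
    exact hmem
  have hpj : ∀ j, 0 < p j := by
    intro j
    have h := hup j (p j - ε / 2) (by
      have : p j - ε / 2 - p j = -(ε / 2) := by ring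
      rw [this, abs_neg, abs_of_nonneg (by linarith)]; linarith)
    have h2 := h.1 j
    rw [Function.update_self] at h2
    linarith
  have hpsum : ∑ j, p j < 1 := by
    set j0 : Fin m := ⟨0, hm⟩
    have h := hup j0 (p j0 + ε / 2) (by
      have : p j0 + ε / 2 - p j0 = ε / 2 := by ring
      rw [this, abs_of_nonneg (by linarith)]; linarith)
    have hqs := h.2
    rw [Finset.sum_update_of_mem (Finset.mem_univ j0)] at hqs
    have h2 := Finset.sum_eq_sum_sdiff_singleton_add (Finset.mem_univ j0) p
    linarith
  -- existence
  obtain ⟨x, hxQ, hxpos, hx0pos, hcone⟩ :=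
    exists_sol m a ha Q hQne hQcomp hQconv hQS p hpQ hpj hpsum
  set τ : Fin m → ℝ := tauOf m a x with hτdef
  have hexp : ∀ k, Real.exp (-(τ k)) * a k = x k / (1 - ∑ i, x i) := by
    intro k
    have h1 : Real.exp (-(τ k)) = x k / (a k * (1 - ∑ i, x i)) := by
      simp only [hτdef, tauOf]
      rw [show -(Real.log (a k) + Real.log (1 - ∑ i, x i) - Real.log (x k))
          = Real.log (x k) - (Real.log (a k) + Real.log (1 - ∑ i, x i)) from by ring,
        Real.exp_sub, Real.exp_add, Real.exp_log (ha k), Real.exp_log hx0pos,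
        Real.exp_log (hxpos k)]
    rw [h1]
    have hak : a k ≠ 0 := (ha k).ne'
    have hc : (1:ℝ) - ∑ i, x i ≠ 0 := hx0pos.ne'
    field_simp
  have hmueq : μ (fun j => Complex.exp (-(τ j : ℂ) / 2) * z j) = x := by
    funext j
    simp only [hμ, hw τ, hexp]
    rw [← Finset.sum_div]
    have h1s : (1:ℝ) + (∑ k, x k) / (1 - ∑ i, x i) = 1 / (1 - ∑ i, x i) := by
      field_simp; ring
    rw [h1s]
    have hc : (1:ℝ) - ∑ i, x i ≠ 0 := hx0pos.ne'
    field_simp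
  have hconeQ : ∀ y ∈ Q, ∑ j, τ j * y j ≤ ∑ j, τ j * x j := by
    intro y hy
    have h := hcone y hy
    have h2 : ∑ j, τ j * (y j - x j) = ∑ j, τ j * y j - ∑ j, τ j * x j := by
      rw [← Finset.sum_sub_distrib]
      exact Finset.sum_congr rfl fun j _ => by ring
    rw [h2] at h
    linarith
  refine ⟨(τ, x), ⟨hxQ, hmueq, hconeQ⟩, ?_⟩
  -- uniqueness
  rintro ⟨τ', x'⟩ ⟨hx'Q, hmu', hcone'⟩
  obtain ⟨hx'pos, hx'0pos, hτ'eq⟩ := sol_props m a τ' x' ha (hchar τ' x' hmu')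
  have hx'S := hQS x' hx'Q
  have hxS := hQS x hxQ
  have hxeq : x' = x := by
    by_contra hne
    have h1 : PhiF m a x' < PhiF m a x + ∑ j, τ j * (x' j - x j) :=
      Phi_grad_lt m a x x' hxpos hx0pos hx'S.1 hx'S.2 hne
    have h1' : PhiF m a x' < PhiF m a x := lt_of_lt_of_le h1 (by linarith [hcone x' hx'Q])
    have h2 : PhiF m a x < PhiF m a x' + ∑ j, tauOf m a x' j * (x j - x' j) :=
      Phi_grad_lt m a x' x hx'pos hx'0pos hxS.1 hxS.2 (Ne.symm hne)
    have h3 : ∑ j, tauOf m a x' j * (x j - x' j) ≤ 0 := by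
      have hc := hcone' x hxQ
      have heq : ∑ j, tauOf m a x' j * (x j - x' j)
          = ∑ j, τ' j * x j - ∑ j, τ' j * x' j := by
        simp only [← hτ'eq]
        rw [← Finset.sum_sub_distrib]
        exact Finset.sum_congr rfl fun j _ => by ring
      rw [heq]
      linarith
    linarith
  have hτeq : τ' = τ := by
    funext j
    rw [hτ'eq j, hxeq]
  exact Prod.ext_iff.mpr ⟨hτeq, hxeq⟩
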